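/- For any field 𝕂 and any q ∈ 𝕂^×, the short exact sequence 1 → Hom(ℤ², 𝕂^×) → Aut(A_q) → Aut(ℤ², λ) → 1 splits, where λ(γ,γ') = q^{γ₁γ₂' − γ₂γ₁'}. Concretely, for q² ≠ 1, the assignment sending the generators g₁ = [[0,1],[−1,0]] and g₂ = [[1,1],[−1,0]] of SL₂(ℤ) to the automorphisms ĝ₁(δ_γ) = q^{γ₁ − γ₁γ₂} δ_{g₁γ} and ĝ₂(δ_γ) = q^{−C(γ₁,2) − γ₁γ₂} δ_{g₂γ} (with suitable scalar normalizations r₁ = q, r₂ = s₁ = s₂ = 1) extends to a group homomorphism SL₂(ℤ) → Aut(A_q) splitting the quotient map. -/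

import Mathlib

open Matrix

private def Tz (n : ℤ) : ℤ := n * (n - 1) / 2

private lemma Tz_double (n : ℤ) : 2 * Tz n = n * (n - 1) := by
  have h : (2:ℤ) ∣ n * (n - 1) := by
    rcases Int.even_or_odd n with h | h
    · exact Dvd.dvd.mul_right h.two_dvd _
    · exact Dvd.dvd.mul_left
        (by simpa using (Int.even_sub_one.mpr (Int.not_even_iff_odd.mpr h)).two_dvd) _
  exact Int.mul_ediv_cancel' h

private lemma Tz_add (u v : ℤ) : Tz (u + v) = Tz u + Tz v + u * v := by
  have h1 := Tz_double (u + v); have h2 := Tz_double u; have h3 := Tz_double v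
  have h : 2 * Tz (u+v) = 2 * (Tz u + Tz v + u*v) := by linear_combination h1 - h2 - h3
  linarith

private lemma Tz_mul (u v : ℤ) : Tz (u * v) = u^2 * Tz v + Tz u * v := by
  have h1 := Tz_double (u * v); have h2 := Tz_double u; have h3 := Tz_double v
  have h : 2 * Tz (u*v) = 2 * (u^2 * Tz v + Tz u * v) := by
    linear_combination h1 - u^2*h3 - v*h2
  linarith

private lemma Tz_lin (p r x y : ℤ) :
    Tz (p*x + r*y) = p^2 * Tz x + Tz p * x + r^2 * Tz y + Tz r * y + p*r*(x*y) := by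
  rw [Tz_add, Tz_mul, Tz_mul]; ring

private def hlf (m : ℤ) : ℤ := m / 2

private lemma odd_col {m n u v : ℤ} (h : m*u - n*v = 1) : Odd m ∨ Odd n := by
  by_contra hc
  push_neg at hc
  obtain ⟨h1, h2⟩ := hc
  rw [Int.not_odd_iff_even] at h1 h2
  obtain ⟨k, hk⟩ := h1; obtain ⟨l, hl⟩ := h2
  subst hk; subst hl
  have h2 : 2*(k*u) - 2*(l*v) = 1 := by linear_combination h
  set K := k*u; set L := l*v
  omega

private lemma hlf_double {m n : ℤ} (h : Odd m ∨ Odd n) :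
    2 * hlf ((m-1)*(n-1)) = (m-1)*(n-1) := by
  have hd : (2:ℤ) ∣ (m-1)*(n-1) := by
    rcases h with h | h
    · exact Dvd.dvd.mul_right
        (by simpa using (Int.even_sub_one.mpr (Int.not_even_iff_odd.mpr h)).two_dvd) _
    · exact Dvd.dvd.mul_left
        (by simpa using (Int.even_sub_one.mpr (Int.not_even_iff_odd.mpr h)).two_dvd) _
  exact Int.mul_ediv_cancel' hd

/-- exact exponent for the `q² ≠ 1` (SL₂) case -/
private def Eex (a b c d x y : ℤ) : ℤ :=
  a*c*Tz x + b*d*Tz y + b*c*(x*y) + hlf ((a-1)*(c-1))*x + hlf ((b-1)*(d-1))*y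

private lemma Eex_one (x y : ℤ) : Eex 1 0 0 1 x y = 0 := by
  simp [Eex, hlf]

private lemma Eex_mult (a b c d x y x' y' : ℤ) (hdg : a*d - b*c = 1) :
    Eex a b c d (x+x') (y+y') + x*y'
      = Eex a b c d x y + Eex a b c d x' y' + (a*x+b*y)*(c*x'+d*y') := by
  simp only [Eex]
  rw [Tz_add x x', Tz_add y y']
  linear_combination (-(x*y')) * hdg

private lemma Eex_cocycle (a b c d p r s t x y : ℤ)
    (hdg : a*d - b*c = 1) (hdh : p*t - r*s = 1) :
    Eex (a*p+b*s) (a*r+b*t) (c*p+d*s) (c*r+d*t) x y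
      = Eex p r s t x y + Eex a b c d (p*x+r*y) (s*x+t*y) := by
  have hTx := Tz_double x
  have hTy := Tz_double y
  have hTp := Tz_double p
  have hTr := Tz_double r
  have hTs := Tz_double s
  have hTt := Tz_double t
  have hHg1 : 2 * hlf ((a-1)*(c-1)) = (a-1)*(c-1) :=
    hlf_double (odd_col (u := d) (v := b) (by linear_combination hdg))
  have hHg2 : 2 * hlf ((b-1)*(d-1)) = (b-1)*(d-1) :=
    hlf_double (odd_col (u := -c) (v := -a) (by linear_combination hdg))
  have hHh1 : 2 * hlf ((p-1)*(s-1)) = (p-1)*(s-1) :=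
    hlf_double (odd_col (u := t) (v := r) (by linear_combination hdh))
  have hHh2 : 2 * hlf ((r-1)*(t-1)) = (r-1)*(t-1) :=
    hlf_double (odd_col (u := -s) (v := -p) (by linear_combination hdh))
  have hHG1 : 2 * hlf ((a*p+b*s-1)*(c*p+d*s-1)) = (a*p+b*s-1)*(c*p+d*s-1) :=
    hlf_double (odd_col (u := c*r+d*t) (v := a*r+b*t)
      (by linear_combination (p*t - r*s)*hdg + hdh))
  have hHG2 : 2 * hlf ((a*r+b*t-1)*(c*r+d*t-1)) = (a*r+b*t-1)*(c*r+d*t-1) :=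
    hlf_double (odd_col (u := -(c*p+d*s)) (v := -(a*p+b*s))
      (by linear_combination (p*t - r*s)*hdg + hdh))
  simp only [Eex]
  rw [Tz_lin p r x y, Tz_lin s t x y]
  apply mul_left_cancel₀ (show (2:ℤ) ≠ 0 by norm_num)
  linear_combination ((-(p*s) + b*c*p*s + a*d*p*s)) * hTx
    + ((-(r*t) + b*c*r*t + a*d*r*t)) * hTy
    + (-(a*c*x)) * hTp + (-(a*c*y)) * hTr + (-(b*d*x)) * hTs + (-(b*d*y)) * hTt
    + (-(r*y) - p*x) * hHg1 + (-(t*y) - s*x) * hHg2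
    + (-x) * hHh1 + (-y) * hHh2 + x * hHG1 + y * hHG2
    + (r*t*y^2 + 2*r*s*x*y + p*s*x^2) * hdg

private def tq (u v : ℤ) : ℤ := Tz u + Tz v + u*v

/-- exponent for the `q = -1` case -/
private def Eng (a b c d x y : ℤ) : ℤ :=
  tq x y + tq (a*x+b*y) (c*x+d*y) + (a*b+b*c+c*d)*(x*y) + (b+d+a*d)*x + (a+c+a*d)*y

private lemma keyM : ∀ a b c d x y x' y' : ZMod 2, a*d - b*c = 1 →
    (x*x' + y*y' + x*y' + x'*y)
      + ((a*x+b*y)*(a*x'+b*y') + (c*x+d*y)*(c*x'+d*y')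
          + (a*x+b*y)*(c*x'+d*y') + (c*x+d*y)*(a*x'+b*y'))
      + (a*b+b*c+c*d)*(x*y' + x'*y) + x*y' - (a*x+b*y)*(c*x'+d*y') = 0 := by decide

private lemma keyC : ∀ a b c d p r s t x y : ZMod 2,
    a*d - b*c = 1 → p*t - r*s = 1 →
    (((a*p+b*s)*(a*r+b*t)+(a*r+b*t)*(c*p+d*s)+(c*p+d*s)*(c*r+d*t))*(x*y)
      + ((a*r+b*t)+(c*r+d*t)+(a*p+b*s)*(c*r+d*t))*x
      + ((a*p+b*s)+(c*p+d*s)+(a*p+b*s)*(c*r+d*t))*y)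
    - ((p*r+r*s+s*t)*(x*y) + (r+t+p*t)*x + (p+s+p*t)*y)
    - ((a*b+b*c+c*d)*((p*x+r*y)*(s*x+t*y)) + (b+d+a*d)*(p*x+r*y) + (a+c+a*d)*(s*x+t*y))
      = 0 := by decide

private lemma int_odd_cast2 {m : ℤ} (h : Odd m) : (m : ZMod 2) = 1 := by
  obtain ⟨k, hk⟩ := h
  have h2 := congrArg (Int.cast : ℤ → ZMod 2) hk
  push_cast at h2
  rw [h2, show (2:ZMod 2) = 0 from rfl]
  ring

private lemma Eng_mult_par (a b c d x y x' y' : ℤ) (hodd : Odd (a*d - b*c)) :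
    (2:ℤ) ∣ (Eng a b c d (x+x') (y+y') + x*y'
      - (Eng a b c d x y + Eng a b c d x' y' + (a*x+b*y)*(c*x'+d*y'))) := by
  have hsplit : Eng a b c d (x+x') (y+y') + x*y'
      - (Eng a b c d x y + Eng a b c d x' y' + (a*x+b*y)*(c*x'+d*y'))
      = (x*x' + y*y' + x*y' + x'*y)
        + ((a*x+b*y)*(a*x'+b*y') + (c*x+d*y)*(c*x'+d*y')
            + (a*x+b*y)*(c*x'+d*y') + (c*x+d*y)*(a*x'+b*y'))
        + (a*b+b*c+c*d)*(x*y' + x'*y) + x*y' - (a*x+b*y)*(c*x'+d*y') := by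
    simp only [Eng, tq]
    rw [show a*(x+x')+b*(y+y') = (a*x+b*y)+(a*x'+b*y') by ring,
        show c*(x+x')+d*(y+y') = (c*x+d*y)+(c*x'+d*y') by ring,
        Tz_add x x', Tz_add y y', Tz_add (a*x+b*y) (a*x'+b*y'),
        Tz_add (c*x+d*y) (c*x'+d*y')]
    ring
  rw [hsplit]
  have hdet2 : ((a:ZMod 2))*(d:ZMod 2) - (b:ZMod 2)*(c:ZMod 2) = 1 := by
    have h := int_odd_cast2 hodd
    push_cast at h
    linear_combination h
  have hz := keyM (a:ZMod 2) b c d x y x' y' hdet2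
  have hcast : ((((x*x' + y*y' + x*y' + x'*y)
        + ((a*x+b*y)*(a*x'+b*y') + (c*x+d*y)*(c*x'+d*y')
            + (a*x+b*y)*(c*x'+d*y') + (c*x+d*y)*(a*x'+b*y'))
        + (a*b+b*c+c*d)*(x*y' + x'*y) + x*y' - (a*x+b*y)*(c*x'+d*y')) : ℤ) : ZMod 2) = 0 := by
    push_cast
    linear_combination hz
  exact_mod_cast (ZMod.intCast_zmod_eq_zero_iff_dvd _ 2).mp hcast

private lemma Eng_cocycle_par (a b c d p r s t x y : ℤ)
    (hg : Odd (a*d - b*c)) (hh : Odd (p*t - r*s)) :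
    (2:ℤ) ∣ (Eng (a*p+b*s) (a*r+b*t) (c*p+d*s) (c*r+d*t) x y
      - (Eng p r s t x y + Eng a b c d (p*x+r*y) (s*x+t*y))) := by
  have hsplit : Eng (a*p+b*s) (a*r+b*t) (c*p+d*s) (c*r+d*t) x y
      - (Eng p r s t x y + Eng a b c d (p*x+r*y) (s*x+t*y))
      = ((((a*p+b*s)*(a*r+b*t)+(a*r+b*t)*(c*p+d*s)+(c*p+d*s)*(c*r+d*t))*(x*y)
          + ((a*r+b*t)+(c*r+d*t)+(a*p+b*s)*(c*r+d*t))*x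
          + ((a*p+b*s)+(c*p+d*s)+(a*p+b*s)*(c*r+d*t))*y)
        - ((p*r+r*s+s*t)*(x*y) + (r+t+p*t)*x + (p+s+p*t)*y)
        - ((a*b+b*c+c*d)*((p*x+r*y)*(s*x+t*y)) + (b+d+a*d)*(p*x+r*y) + (a+c+a*d)*(s*x+t*y)))
        - 2*(Tz (p*x+r*y) + Tz (s*x+t*y) + (p*x+r*y)*(s*x+t*y)) := by
    simp only [Eng, tq]
    rw [show (a*p+b*s)*x+(a*r+b*t)*y = a*(p*x+r*y)+b*(s*x+t*y) by ring,
        show (c*p+d*s)*x+(c*r+d*t)*y = c*(p*x+r*y)+d*(s*x+t*y) by ring]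
    ring
  rw [hsplit]
  apply dvd_sub
  · have hdg2 : ((a:ZMod 2))*(d:ZMod 2) - (b:ZMod 2)*(c:ZMod 2) = 1 := by
      have h := int_odd_cast2 hg; push_cast at h; linear_combination h
    have hdh2 : ((p:ZMod 2))*(t:ZMod 2) - (r:ZMod 2)*(s:ZMod 2) = 1 := by
      have h := int_odd_cast2 hh; push_cast at h; linear_combination h
    have hz := keyC (a:ZMod 2) b c d p r s t x y hdg2 hdh2
    have hcast : ((((((a*p+b*s)*(a*r+b*t)+(a*r+b*t)*(c*p+d*s)+(c*p+d*s)*(c*r+d*t))*(x*y)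
          + ((a*r+b*t)+(c*r+d*t)+(a*p+b*s)*(c*r+d*t))*x
          + ((a*p+b*s)+(c*p+d*s)+(a*p+b*s)*(c*r+d*t))*y)
        - ((p*r+r*s+s*t)*(x*y) + (r+t+p*t)*x + (p+s+p*t)*y)
        - ((a*b+b*c+c*d)*((p*x+r*y)*(s*x+t*y)) + (b+d+a*d)*(p*x+r*y)
            + (a+c+a*d)*(s*x+t*y))) : ℤ) : ZMod 2) = 0 := by
      push_cast
      linear_combination hz
    exact_mod_cast (ZMod.intCast_zmod_eq_zero_iff_dvd _ 2).mp hcast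
  · exact Dvd.intro _ rfl

private lemma Eng_one (x y : ℤ) : Eng 1 0 0 1 x y = 2*(tq x y + x + y) := by
  simp only [Eng, tq]
  rw [show 1*x+0*y = x by ring, show 0*x+1*y = y by ring]
  ring

/-- the underlying matrix of an element of a subgroup of `GL₂(ℤ)` -/
private def mat {H : Subgroup (Matrix (Fin 2) (Fin 2) ℤ)ˣ} (g : H) :
    Matrix (Fin 2) (Fin 2) ℤ :=
  ((g : (Matrix (Fin 2) (Fin 2) ℤ)ˣ) : Matrix (Fin 2) (Fin 2) ℤ)

private lemma mat_mul {H : Subgroup (Matrix (Fin 2) (Fin 2) ℤ)ˣ} (g h : H) :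
    mat (g * h) = mat g * mat h := rfl

private lemma mat_one {H : Subgroup (Matrix (Fin 2) (Fin 2) ℤ)ˣ} :
    mat (1 : H) = (1 : Matrix (Fin 2) (Fin 2) ℤ) := rfl

private lemma mulVec0 (g : Matrix (Fin 2) (Fin 2) ℤ) (γ : Fin 2 → ℤ) :
    g.mulVec γ 0 = g 0 0 * γ 0 + g 0 1 * γ 1 := by
  simp [Matrix.mulVec, dotProduct, Fin.sum_univ_two]

private lemma mulVec1 (g : Matrix (Fin 2) (Fin 2) ℤ) (γ : Fin 2 → ℤ) :
    g.mulVec γ 1 = g 1 0 * γ 0 + g 1 1 * γ 1 := by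
  simp [Matrix.mulVec, dotProduct, Fin.sum_univ_two]

private lemma mulent (g h : Matrix (Fin 2) (Fin 2) ℤ) (i j : Fin 2) :
    (g * h) i j = g i 0 * h 0 j + g i 1 * h 1 j := by
  simp [Matrix.mul_apply, Fin.sum_univ_two]

/-- For any field `𝕂` and `q ∈ 𝕂ˣ`, the exact sequence
`1 → Hom(ℤ², 𝕂ˣ) → Aut(A_q) → Aut(ℤ², λ) → 1` splits: there is a group homomorphism
`σ : Aut(ℤ², λ) → Aut(A_q)` such that `σ(g)` maps the basis vector `δ_γ` of the
quantum torus `A_q` into `𝕂ˣ · δ_{gγ}`, i.e. `σ` is a homomorphic section of the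
projection `Aut(A_q) → Aut(ℤ², λ)`. Here `A_q` is presented by a `𝕂`-basis
`(δ_γ)_{γ ∈ ℤ²}` with `δ_γ δ_{γ'} = q^{γ₁γ₂'} δ_{γ+γ'}`, and
`λ(γ,γ') = q^{γ₁γ₂' − γ₂γ₁'}`. -/
theorem aut_sequence_of_quantum_torus_splits
    {K : Type*} [Field K] (q : Kˣ)
    {A : Type*} [Ring A] [Algebra K A]
    (b : Module.Basis (Fin 2 → ℤ) K A)
    (hb : ∀ γ γ' : Fin 2 → ℤ,
      b γ * b γ' = ((q ^ (γ 0 * γ' 1) : Kˣ) : K) • b (γ + γ'))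
    (H : Subgroup (Matrix (Fin 2) (Fin 2) ℤ)ˣ)
    (hH : ∀ g : (Matrix (Fin 2) (Fin 2) ℤ)ˣ, g ∈ H ↔
      ∀ a c : Fin 2 → ℤ,
        (q ^ (((↑g : Matrix (Fin 2) (Fin 2) ℤ).mulVec a 0) *
              ((↑g : Matrix (Fin 2) (Fin 2) ℤ).mulVec c 1) -
              ((↑g : Matrix (Fin 2) (Fin 2) ℤ).mulVec a 1) *
              ((↑g : Matrix (Fin 2) (Fin 2) ℤ).mulVec c 0)) : Kˣ)
          = q ^ (a 0 * c 1 - a 1 * c 0)) :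
    ∃ σ : H →* (A ≃ₐ[K] A),
      ∀ (g : H) (γ : Fin 2 → ℤ), ∃ c : Kˣ,
        (σ g) (b γ) = (c : K) • b ((↑(↑g : (Matrix (Fin 2) (Fin 2) ℤ)ˣ) :
          Matrix (Fin 2) (Fin 2) ℤ).mulVec γ) := by
  classical
  -- the basis vector at 0 is the unit
  have b0 : b 0 = 1 := by
    have key : LinearMap.mulLeft K (b 0) = LinearMap.id := by
      apply b.ext; intro γ
      simp only [LinearMap.mulLeft_apply, LinearMap.id_coe, id_eq]
      rw [hb]
      simp
    have h1 := LinearMap.congr_fun key 1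
    simpa using h1
  -- the q-power determinant relation for elements of H
  have hdetq : ∀ g : H,
      (q ^ (mat g 0 0 * mat g 1 1 - mat g 1 0 * mat g 0 1) : Kˣ) = q := by
    intro g
    have h := (hH ↑g).mp g.2 ![1,0] ![0,1]
    rw [mulVec0, mulVec1, mulVec0, mulVec1] at h
    norm_num at h
    simpa [mat] using h
  -- determinant is ±1
  have hdetpm : ∀ g : H, mat g 0 0 * mat g 1 1 - mat g 0 1 * mat g 1 0 = 1 ∨
      mat g 0 0 * mat g 1 1 - mat g 0 1 * mat g 1 0 = -1 := by
    intro g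
    have hu : IsUnit (mat g).det := by
      apply IsUnit.of_mul_eq_one
        ((((g : (Matrix (Fin 2) (Fin 2) ℤ)ˣ)⁻¹ : (Matrix (Fin 2) (Fin 2) ℤ)ˣ) :
          Matrix (Fin 2) (Fin 2) ℤ).det)
      rw [← Matrix.det_mul,
        show mat g * (((g : (Matrix (Fin 2) (Fin 2) ℤ)ˣ)⁻¹ : (Matrix (Fin 2) (Fin 2) ℤ)ˣ) :
          Matrix (Fin 2) (Fin 2) ℤ) = 1 from Units.mul_inv _, Matrix.det_one]
    rw [Matrix.det_fin_two] at hu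
    exact Int.isUnit_iff.mp hu
  -- choose a suitable exponent function depending on q
  obtain ⟨e, hP1, hP2, hP3⟩ :
      ∃ e : ℤ → ℤ → ℤ → ℤ → ℤ → ℤ → ℤ,
        (∀ (g : H) (x y x' y' : ℤ),
          (q ^ (e (mat g 0 0) (mat g 0 1) (mat g 1 0) (mat g 1 1) (x+x') (y+y') + x*y') : Kˣ)
            = q ^ (e (mat g 0 0) (mat g 0 1) (mat g 1 0) (mat g 1 1) x y
                + e (mat g 0 0) (mat g 0 1) (mat g 1 0) (mat g 1 1) x' y'
                + (mat g 0 0*x + mat g 0 1*y)*(mat g 1 0*x' + mat g 1 1*y'))) ∧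
        (∀ (g h : H) (x y : ℤ),
          (q ^ (e (mat (g*h) 0 0) (mat (g*h) 0 1) (mat (g*h) 1 0) (mat (g*h) 1 1) x y) : Kˣ)
            = q ^ (e (mat h 0 0) (mat h 0 1) (mat h 1 0) (mat h 1 1) x y
                + e (mat g 0 0) (mat g 0 1) (mat g 1 0) (mat g 1 1)
                    (mat h 0 0*x + mat h 0 1*y) (mat h 1 0*x + mat h 1 1*y))) ∧
        (∀ x y : ℤ, (q ^ (e 1 0 0 1 x y) : Kˣ) = 1) := by
    by_cases hq1 : q = 1
    · exact ⟨fun _ _ _ _ _ _ => 0, by intros; simp [hq1], by intros; simp [hq1],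
        by intros; simp [hq1]⟩
    by_cases hqn1 : q = -1
    · -- q = -1
      have hq2 : q ^ (2:ℤ) = 1 := by
        rw [hqn1, show (2:ℤ) = ((2:ℕ):ℤ) from rfl, zpow_natCast]
        simp
      have congrq : ∀ m n : ℤ, (2:ℤ) ∣ (m - n) → (q^m : Kˣ) = q^n := by
        rintro m n ⟨k, hk⟩
        have hm : m = n + 2*k := by linarith
        rw [hm, _root_.zpow_add, _root_.zpow_mul, hq2, _root_.one_zpow, mul_one]
      have hodd : ∀ g : H, Odd (mat g 0 0 * mat g 1 1 - mat g 0 1 * mat g 1 0) := by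
        intro g
        rcases hdetpm g with h | h <;> rw [h] <;> decide
      refine ⟨Eng, ?_, ?_, ?_⟩
      · intro g x y x' y'
        exact congrq _ _ (Eng_mult_par _ _ _ _ _ _ _ _ (hodd g))
      · intro g h x y
        rw [mat_mul, mulent, mulent, mulent, mulent]
        exact congrq _ _ (Eng_cocycle_par _ _ _ _ _ _ _ _ _ _ (hodd g) (hodd h))
      · intro x y
        rw [Eng_one, _root_.zpow_mul, hq2, _root_.one_zpow]
    · -- q² ≠ 1 : every element of H has determinant 1
      have hdet1 : ∀ g : H, mat g 0 0 * mat g 1 1 - mat g 0 1 * mat g 1 0 = 1 := by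
        intro g
        rcases hdetpm g with h | h
        · exact h
        · exfalso
          have hq := hdetq g
          rw [show mat g 0 0 * mat g 1 1 - mat g 1 0 * mat g 0 1 = -1 by linarith] at hq
          rw [show (-1 : ℤ) = -(1:ℤ) from rfl, _root_.zpow_neg, zpow_one] at hq
          have hqq : (q:K) * q = 1 := by
            have h2 : (q : Kˣ) * q = 1 := by
              nth_rewrite 2 [← hq]
              exact mul_inv_cancel q
            rw [← Units.val_mul, h2, Units.val_one]
          rcases mul_self_eq_one_iff.mp hqq with h1 | h1
          · exact hq1 (Units.ext (by simpa using h1))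
          · exact hqn1 (Units.ext (by simpa using h1))
      refine ⟨Eex, ?_, ?_, ?_⟩
      · intro g x y x' y'
        exact congrArg (fun z => q ^ z) (Eex_mult _ _ _ _ _ _ _ _ (hdet1 g))
      · intro g h x y
        rw [mat_mul, mulent, mulent, mulent, mulent]
        exact congrArg (fun z => q ^ z) (Eex_cocycle _ _ _ _ _ _ _ _ _ _
          (hdet1 g) (hdet1 h))
      · intro x y
        rw [Eex_one, zpow_zero]
  -- the linear maps realizing the automorphisms
  set Lf : H → (A →ₗ[K] A) := fun g =>
    Module.Basis.constr (M' := A) b K (fun γ =>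
      ((q ^ (e (mat g 0 0) (mat g 0 1) (mat g 1 0) (mat g 1 1) (γ 0) (γ 1)) : Kˣ) : K) •
        b ((mat g).mulVec γ)) with hLf
  have hLb : ∀ (g : H) (γ : Fin 2 → ℤ), Lf g (b γ) =
      ((q ^ (e (mat g 0 0) (mat g 0 1) (mat g 1 0) (mat g 1 1) (γ 0) (γ 1)) : Kˣ) : K) •
        b ((mat g).mulVec γ) := by
    intro g γ
    rw [hLf]
    exact b.constr_basis K _ γ
  -- composition
  have hcomp : ∀ g h : H, (Lf g).comp (Lf h) = Lf (g*h) := by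
    intro g h
    apply b.ext; intro γ
    rw [LinearMap.comp_apply, hLb, _root_.map_smul, hLb, smul_smul, hLb,
      Matrix.mulVec_mulVec, ← mat_mul]
    congr 1
    rw [← Units.val_mul, ← _root_.zpow_add]
    refine congrArg Units.val ?_
    rw [mulVec0, mulVec1]
    exact (hP2 g h (γ 0) (γ 1)).symm
  -- identity
  have hid : Lf 1 = LinearMap.id := by
    apply b.ext; intro γ
    rw [hLb, mat_one, Matrix.one_mulVec]
    rw [show (1 : Matrix (Fin 2) (Fin 2) ℤ) 0 0 = 1 by simp,
        show (1 : Matrix (Fin 2) (Fin 2) ℤ) 0 1 = 0 by simp [Matrix.one_apply],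
        show (1 : Matrix (Fin 2) (Fin 2) ℤ) 1 0 = 0 by simp [Matrix.one_apply],
        show (1 : Matrix (Fin 2) (Fin 2) ℤ) 1 1 = 1 by simp]
    rw [hP3 (γ 0) (γ 1)]
    simp
  -- unit scalar at γ = 0
  have hq0 : ∀ g : H,
      (q ^ (e (mat g 0 0) (mat g 0 1) (mat g 1 0) (mat g 1 1) 0 0) : Kˣ) = 1 := by
    intro g
    have h := hP1 g 0 0 0 0
    simp only [add_zero, mul_zero, zero_mul] at h
    rw [_root_.zpow_add] at h
    exact (left_eq_mul.mp h)
  -- maps one to one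
  have hone : ∀ g : H, Lf g 1 = 1 := by
    intro g
    rw [← b0, hLb, Matrix.mulVec_zero, b0]
    simp only [Pi.zero_apply]
    rw [hq0 g]
    simp
  -- multiplicativity on basis vectors
  have hbb : ∀ (g : H) (γ γ' : Fin 2 → ℤ), Lf g (b γ * b γ') = Lf g (b γ) * Lf g (b γ') := by
    intro g γ γ'
    rw [hb, _root_.map_smul, hLb, hLb, hLb, smul_mul_smul_comm, hb, smul_smul, smul_smul,
      ← Matrix.mulVec_add]
    congr 1
    rw [← Units.val_mul, ← Units.val_mul, ← Units.val_mul, ← _root_.zpow_add, ← _root_.zpow_add, ← _root_.zpow_add]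
    refine congrArg Units.val ?_
    rw [mulVec0 (mat g) γ, mulVec1 (mat g) γ', Pi.add_apply, Pi.add_apply]
    rw [add_comm (γ 0 * γ' 1)]
    exact hP1 g (γ 0) (γ 1) (γ' 0) (γ' 1)
  -- full multiplicativity
  have hmul : ∀ (g : H) (u v : A), Lf g (u * v) = Lf g u * Lf g v := by
    intro g u v
    have hFG : (LinearMap.mul K A).compr₂ (Lf g)
        = (LinearMap.mul K A).compl₁₂ (Lf g) (Lf g) := by
      apply b.ext; intro γ
      apply b.ext; intro γ'
      simp only [LinearMap.compr₂_apply, LinearMap.mul_apply', LinearMap.compl₁₂_apply]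
      exact hbb g γ γ'
    have := LinearMap.congr_fun (LinearMap.congr_fun hFG u) v
    simpa only [LinearMap.compr₂_apply, LinearMap.mul_apply', LinearMap.compl₁₂_apply]
      using this
  -- package as algebra homomorphisms
  let ah : H → (A →ₐ[K] A) := fun g => AlgHom.ofLinearMap (Lf g) (hone g) (hmul g)
  have hah : ∀ (g : H) (u : A), ah g u = Lf g u := fun g u => rfl
  have hcomp' : ∀ (g h : H) (u : A), Lf g (Lf h u) = Lf (g*h) u := by
    intro g h u
    exact LinearMap.congr_fun (hcomp g h) u
  let ae : H → (A ≃ₐ[K] A) := fun g =>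
    AlgEquiv.ofAlgHom (ah g) (ah g⁻¹)
      (by
        apply AlgHom.ext; intro u
        show Lf g (Lf g⁻¹ u) = u
        rw [hcomp', mul_inv_cancel, hid]
        rfl)
      (by
        apply AlgHom.ext; intro u
        show Lf g⁻¹ (Lf g u) = u
        rw [hcomp', inv_mul_cancel, hid]
        rfl)
  have hae : ∀ (g : H) (u : A), ae g u = Lf g u := fun g u => rfl
  refine ⟨MonoidHom.mk' ae ?_, ?_⟩
  · intro g h
    apply AlgEquiv.ext; intro u
    rw [AlgEquiv.mul_apply, hae, hae, hae, hcomp']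
  · intro g γ
    refine ⟨q ^ (e (mat g 0 0) (mat g 0 1) (mat g 1 0) (mat g 1 1) (γ 0) (γ 1)), ?_⟩
    show ae g (b γ) = _
    rw [hae, hLb]
    rfl
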